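/- For any nondegenerate chord ℓ of the unit circle (under the tripling map σ₃), there exists n ≥ 0 such that ‖σ₃ⁿ(ℓ)‖ ≥ 1/4. -/

import Mathlib

/-- The length of the chord of `ℝ/ℤ` with endpoints `a`, `b`. -/
noncomputable def chordLen (a b : UnitAddCircle) : ℝ := ‖a - b‖

lemma exists_rep (y : UnitAddCircle) : ∃ t : ℝ, |t| = ‖y‖ ∧ (t : UnitAddCircle) = y := by
  obtain ⟨x⟩ := y
  refine ⟨x - round x, ?_, ?_⟩
  · show _ = ‖(x : UnitAddCircle)‖
    rw [AddCircle.norm_eq]; norm_num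
  · show _ = (x : UnitAddCircle)
    simp [AddCircle.coe_sub]

lemma coe_mul3 (t : ℝ) : ((3:ℕ) • (t : UnitAddCircle)) = ((3*t : ℝ) : UnitAddCircle) := by
  rw [← AddCircle.coe_nsmul]; norm_num

lemma norm_coe_eq_abs {t : ℝ} (h : |t| ≤ 1/2) : ‖(t : UnitAddCircle)‖ = |t| := by
  rw [AddCircle.norm_coe_eq_abs_iff (p := (1:ℝ)) one_ne_zero]
  simpa using h

lemma coe_sub_one (s : ℝ) : ((s - 1 : ℝ) : UnitAddCircle) = (s : UnitAddCircle) := by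
  rw [AddCircle.coe_sub, (AddCircle.coe_period (p := (1:ℝ))), sub_zero]

lemma coe_add_one (s : ℝ) : ((s + 1 : ℝ) : UnitAddCircle) = (s : UnitAddCircle) := by
  rw [AddCircle.coe_add, (AddCircle.coe_period (p := (1:ℝ))), add_zero]

lemma lemA {y : UnitAddCircle} (h : ‖y‖ ≤ 1/6) : ‖(3:ℕ) • y‖ = 3 * ‖y‖ := by
  obtain ⟨t, ht, rfl⟩ := exists_rep y
  rw [coe_mul3, norm_coe_eq_abs (by rw [abs_mul]; rw [ht] at *; norm_num; linarith),
    abs_mul, ht]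
  norm_num

lemma lemB {y : UnitAddCircle} (h1 : 1/6 ≤ ‖y‖) (h2 : ‖y‖ ≤ 1/4) :
    ‖(3:ℕ) • y‖ ≥ 1/4 := by
  obtain ⟨t, ht, rfl⟩ := exists_rep y
  rw [← ht] at h1 h2
  rw [coe_mul3]
  rcases le_or_gt 0 t with hs | hs
  · rw [abs_of_nonneg hs] at h1 h2
    rw [← coe_sub_one (3*t), norm_coe_eq_abs (by rw [abs_of_nonpos] <;> linarith),
      abs_of_nonpos (by linarith)]
    linarith
  · rw [abs_of_neg hs] at h1 h2
    rw [← coe_add_one (3*t), norm_coe_eq_abs (by rw [abs_of_nonneg] <;> linarith),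
      abs_of_nonneg (by linarith)]
    linarith

/-- For any nondegenerate chord `ℓ` of the unit circle (under the tripling
map `σ₃`), there exists `n ≥ 0` such that `‖σ₃ⁿ(ℓ)‖ ≥ 1/4`. -/
theorem exists_image_length_ge_quarter (a b : UnitAddCircle) (hab : a ≠ b) :
    ∃ n : ℕ, chordLen ((3 ^ n : ℕ) • a) ((3 ^ n : ℕ) • b) ≥ 1/4 := by
  set x := a - b with hx
  have hx0 : x ≠ 0 := sub_ne_zero.mpr hab
  have hxn : 0 < ‖x‖ := norm_pos_iff.mpr hx0
  have key : ∀ n : ℕ, chordLen ((3 ^ n : ℕ) • a) ((3 ^ n : ℕ) • b) = ‖(3 ^ n : ℕ) • x‖ := by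
    intro n; rw [chordLen, hx, smul_sub]
  by_contra hcon
  push_neg at hcon
  have h4 : ∀ n : ℕ, ‖(3 ^ n : ℕ) • x‖ < 1/4 := by
    intro n; rw [← key]; exact hcon n
  have hsucc : ∀ n : ℕ, ((3 ^ (n+1) : ℕ) • x) = (3:ℕ) • ((3 ^ n : ℕ) • x) := by
    intro n; rw [← mul_smul, ← pow_succ']
  have h6 : ∀ n : ℕ, ‖(3 ^ n : ℕ) • x‖ < 1/6 := by
    intro n
    by_contra hge
    push_neg at hge
    have := lemB hge (h4 n).le
    rw [← hsucc n] at this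
    linarith [h4 (n+1)]
  have heq : ∀ n : ℕ, ‖(3 ^ n : ℕ) • x‖ = 3 ^ n * ‖x‖ := by
    intro n
    induction n with
    | zero => simp
    | succ n ih =>
      rw [hsucc n, lemA (h6 n).le, ih, pow_succ]
      ring
  obtain ⟨n, hn⟩ := pow_unbounded_of_one_lt (R := ℝ) (1/6 / ‖x‖) (by norm_num : (1:ℝ) < 3)
  have := h6 n
  rw [heq n] at this
  rw [div_lt_iff₀ hxn] at hn
  linarith
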